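/- For any finite k, n, c, there exists a finite R such that every coloring of the n-element subsets of an R-element set with c colors admits a homogeneous subset of size k (i.e., R → (k)^n_c). -/

import Mathlib

open Filter Set

/-- Infinite Ramsey theorem on subsets of ℕ. -/
theorem infRamseyAux (c : ℕ) (hc : 0 < c) :
    ∀ (n : ℕ) (f : Finset ℕ → Fin c) (S : Set ℕ), S.Infinite →
      ∃ H : Set ℕ, H ⊆ S ∧ H.Infinite ∧ ∃ v : Fin c,
        ∀ s : Finset ℕ, ↑s ⊆ H → s.card = n → f s = v := by
  intro n
  induction n with
  | zero =>
    intro f S hS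
    refine ⟨S, subset_rfl, hS, f ∅, fun s hs hcard => ?_⟩
    rw [Finset.card_eq_zero] at hcard
    subst hcard; rfl
  | succ n IH =>
    intro f S hS
    haveI : Nonempty (Fin c) := ⟨⟨0, hc⟩⟩
    have key : ∀ T : Set ℕ, T.Infinite → ∃ a : ℕ, a ∈ T ∧
        ∃ (H : Set ℕ) (v : Fin c), H ⊆ T \ {a} ∧ H.Infinite ∧
          ∀ s : Finset ℕ, ↑s ⊆ H → s.card = n → f (insert a s) = v := by
      intro T hT
      obtain ⟨a, ha⟩ := hT.nonempty
      obtain ⟨H, hHsub, hHinf, v, hv⟩ :=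
        IH (fun s => f (insert a s)) (T \ {a}) (hT.diff (Set.finite_singleton a))
      exact ⟨a, ha, H, v, hHsub, hHinf, hv⟩
    choose! A hA Hs V hsub hinf hhom using key
    let step : {T : Set ℕ // T.Infinite} → {T : Set ℕ // T.Infinite} :=
      fun T => ⟨Hs T.1, hinf T.1 T.2⟩
    let chain : ℕ → {T : Set ℕ // T.Infinite} := fun i => step^[i] ⟨S, hS⟩
    have hchain_succ : ∀ i, chain (i + 1) = step (chain i) := by
      intro i
      show step^[i + 1] _ = _
      rw [Function.iterate_succ_apply']
    let a : ℕ → ℕ := fun i => A (chain i).1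
    let col : ℕ → Fin c := fun i => V (chain i).1
    have hmem : ∀ i, a i ∈ (chain i).1 := fun i => hA _ (chain i).2
    have hstep : ∀ i, (chain (i + 1)).1 ⊆ (chain i).1 \ {a i} := by
      intro i
      rw [hchain_succ]
      exact hsub _ (chain i).2
    have hom : ∀ i (s : Finset ℕ), ↑s ⊆ (chain (i + 1)).1 → s.card = n →
        f (insert (a i) s) = col i := by
      intro i s hs hcard
      rw [hchain_succ] at hs
      exact hhom _ (chain i).2 s hs hcard
    have mono : ∀ i j, i ≤ j → (chain j).1 ⊆ (chain i).1 := by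
      intro i j hij
      induction j, hij using Nat.le_induction with
      | base => exact subset_rfl
      | succ j hij IH2 => exact ((hstep j).trans Set.diff_subset).trans IH2
    have hlt : ∀ i j, i < j → a j ∈ (chain (i + 1)).1 :=
      fun i j h => mono (i + 1) j h (hmem j)
    have hainj : Function.Injective a := by
      intro i j hij
      by_contra hne
      rcases Nat.lt_or_ge i j with h | h
      · exact ((hstep i) (hlt i j h)).2 (by simp [hij])
      · have h' : j < i := lt_of_le_of_ne h (Ne.symm hne)
        exact ((hstep j) (hlt j i h')).2 (by simp [hij])
    have hpigeon : ∃ v : Fin c, {i : ℕ | col i = v}.Infinite := by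
      by_contra h
      push_neg at h
      have huniv : (Set.univ : Set ℕ) = ⋃ v : Fin c, {i | col i = v} := by
        ext i; simp
      exact Set.infinite_univ (huniv ▸ Set.finite_iUnion h)
    obtain ⟨v, hv⟩ := hpigeon
    refine ⟨a '' {i | col i = v}, ?_, hv.image hainj.injOn, v, ?_⟩
    · rintro x ⟨i, _, rfl⟩
      exact mono 0 i (Nat.zero_le i) (hmem i)
    · intro s hsH hcard
      have hne : s.Nonempty := by rw [← Finset.card_pos, hcard]; omega
      have hex : ∃ i, col i = v ∧ a i ∈ s := by
        obtain ⟨x, hx⟩ := hne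
        obtain ⟨i, hi, rfl⟩ := hsH hx
        exact ⟨i, hi, hx⟩
      classical
      set i0 := Nat.find hex with hi0
      obtain ⟨hcol0, hmem0⟩ := Nat.find_spec hex
      have herase : ↑(s.erase (a i0)) ⊆ (chain (i0 + 1)).1 := by
        intro x hx
        obtain ⟨hxne, hxs⟩ := Finset.mem_erase.mp hx
        obtain ⟨j, hj, rfl⟩ := hsH hxs
        have hle : i0 ≤ j := Nat.find_min' hex ⟨hj, hxs⟩
        have : i0 < j := lt_of_le_of_ne hle (by rintro rfl; exact hxne rfl)
        exact hlt i0 j this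
      have hcarderase : (s.erase (a i0)).card = n := by
        rw [Finset.card_erase_of_mem hmem0, hcard]; omega
      have := hom i0 (s.erase (a i0)) herase hcarderase
      rw [Finset.insert_erase hmem0] at this
      rw [this, hcol0]

/-- Finite Ramsey's theorem: for all finite `k`, `n`, `c` there is a finite `R` such that
`R → (k)^n_c`: every coloring of the `n`-element subsets of an `R`-element set with `c`
colors admits a homogeneous subset of size `k`. -/
theorem stmt0 (k n c : ℕ) :
    ∃ R : ℕ, ∀ f : Finset (Fin R) → Fin c,
      ∃ X : Finset (Fin R), k ≤ X.card ∧
        ∀ s t : Finset (Fin R), s ⊆ X → t ⊆ X → s.card = n → t.card = n → f s = f t := by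
  classical
  rcases Nat.eq_zero_or_pos c with rfl | hc
  · exact ⟨0, fun f => (f ∅).elim0⟩
  by_contra hcon
  push_neg at hcon
  choose g hg using hcon
  set U := Filter.hyperfilter ℕ with hUdef
  let F : ℕ → Finset ℕ → Fin c := fun R s =>
    if h : ∀ m ∈ s, m < R then g R (s.attachFin h) else ⟨0, hc⟩
  have hex : ∀ s : Finset ℕ, ∃ v : Fin c, {R | F R s = v} ∈ U := by
    intro s
    by_contra h
    push_neg at h
    have h' : ∀ v : Fin c, {R | F R s = v}ᶜ ∈ U :=
      fun v => (Ultrafilter.compl_mem_iff_notMem).mpr (h v)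
    have hmem : (⋂ v : Fin c, {R | F R s = v}ᶜ) ∈ U := Filter.iInter_mem.mpr h'
    obtain ⟨R, hR⟩ := Filter.nonempty_of_mem hmem
    simp only [Set.mem_iInter, Set.mem_compl_iff, Set.mem_setOf_eq] at hR
    exact hR (F R s) rfl
  choose fc hfc using hex
  obtain ⟨H, hHS, hHinf, v, hv⟩ := infRamseyAux c hc n fc Set.univ Set.infinite_univ
  obtain ⟨K, hKH, hKcard⟩ := hHinf.exists_subset_card_eq k
  set R0 := K.sup id + 1 with hR0
  have hKlt : ∀ x ∈ K, x < R0 := fun x hx => Nat.lt_succ_of_le (Finset.le_sup (f := id) hx)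
  have hA : (⋂ s ∈ K.powersetCard n, {R | F R s = fc s}) ∩ {R | R0 ≤ R} ∈ U := by
    refine Filter.inter_mem ((Filter.biInter_finset_mem _).mpr (fun s _ => hfc s)) ?_
    have heq : {R : ℕ | R0 ≤ R} = (Set.Iio R0)ᶜ := by ext R; simp [not_lt]
    rw [heq]
    exact Filter.compl_mem_hyperfilter_of_finite (Set.finite_Iio R0)
  obtain ⟨R, hRA, hRge⟩ := Filter.nonempty_of_mem hA
  have hKR : ∀ m ∈ K, m < R := fun m hm => lt_of_lt_of_le (hKlt m hm) hRge
  obtain ⟨s, t, hsX, htX, hscard, htcard, hne⟩ :=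
    hg R (K.attachFin hKR) (by rw [Finset.card_attachFin, hKcard])
  have key : ∀ u : Finset (Fin R), u ⊆ K.attachFin hKR → u.card = n → g R u = v := by
    intro u hu hucard
    have hval : Function.Injective (Fin.val : Fin R → ℕ) := Fin.val_injective
    set u' := u.image Fin.val with hu'def
    have hu'K : u' ⊆ K := by
      intro x hx
      obtain ⟨y, hy, rfl⟩ := Finset.mem_image.mp hx
      exact (Finset.mem_attachFin hKR).mp (hu hy)
    have hu'card : u'.card = n := by rw [Finset.card_image_of_injective _ hval, hucard]
    have hu'mem : u' ∈ K.powersetCard n := Finset.mem_powersetCard.mpr ⟨hu'K, hu'card⟩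
    have hRmem : F R u' = fc u' := Set.mem_iInter₂.mp hRA u' hu'mem
    have hlt' : ∀ m ∈ u', m < R := fun m hm => hKR m (hu'K hm)
    have hFval : F R u' = g R u := by
      show (if h : ∀ m ∈ u', m < R then g R (u'.attachFin h) else ⟨0, hc⟩) = g R u
      rw [dif_pos hlt']
      congr 1
      ext y
      rw [Finset.mem_attachFin]
      constructor
      · intro hy
        obtain ⟨z, hz, hzy⟩ := Finset.mem_image.mp hy
        exact hval hzy ▸ hz
      · intro hy
        exact Finset.mem_image.mpr ⟨y, hy, rfl⟩
    have hfc' : fc u' = v :=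
      hv u' (fun x hx => hKH (Finset.coe_subset.mpr hu'K hx)) hu'card
    rw [← hFval, hRmem, hfc']
  exact hne ((key s hsX hscard).trans (key t htX htcard).symm)
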